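/- Let V ∈ R^{p×r} have at most s nonzero rows and let W ∈ R^{p×r} be arbitrary. Let s ≤ s' ≤ p and W̄ = HT(W, s'). Then dist²(V, W̄) ≤ (1 + 2√(s/s') (1 + √(s/s'))) · dist²(V, W). -/

import Mathlib

open MeasureTheory ProbabilityTheory Matrix Real
open scoped Classical

noncomputable section

/-- Frobenius norm of a real matrix. -/
def frob {m n : ℕ} (M : Matrix (Fin m) (Fin n) ℝ) : ℝ :=
  Real.sqrt (∑ i, ∑ j, (M i j) ^ 2)

/-- Distance between `p × r` matrices modulo right multiplication by an orthogonal matrix: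
`dist(U,V) = min_{P ∈ O(r)} ‖U P - V‖_F`. -/
def gdist {p r : ℕ} (U V : Matrix (Fin p) (Fin r) ℝ) : ℝ :=
  sInf {x : ℝ | ∃ P : Matrix (Fin r) (Fin r) ℝ, Pᵀ * P = 1 ∧ x = frob (U * P - V)}

/-- Centered multivariate Gaussian with covariance `S`, as the law of `S^{1/2} z` for a
standard Gaussian vector `z`. -/
def mvGaussian {m : ℕ} (S : Matrix (Fin m) (Fin m) ℝ) : Measure (Fin m → ℝ) :=
  if h : S.PosSemidef then
    (Measure.pi fun _ : Fin m => gaussianReal 0 1).map fun z => ((((h.1.eigenvectorUnitary : Matrix (Fin m) (Fin m) ℝ) * diagonal (Real.sqrt ∘ h.1.eigenvalues) *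
      (star h.1.eigenvectorUnitary : Matrix (Fin m) (Fin m) ℝ)))).mulVec z
  else 0

/-- Law of `n` i.i.d. samples from `N_m(0, S)`. -/
def iidLaw (n : ℕ) {m : ℕ} (S : Matrix (Fin m) (Fin m) ℝ) : Measure (Fin n → Fin m → ℝ) :=
  Measure.pi fun _ : Fin n => mvGaussian S

def sampleMean {n m : ℕ} (X : Fin n → Fin m → ℝ) (i : Fin m) : ℝ := (∑ t, X t i) / n

/-- Sample covariance matrix. -/
def sampleCov {n m : ℕ} (X : Fin n → Fin m → ℝ) : Matrix (Fin m) (Fin m) ℝ :=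
  Matrix.of fun i j => (∑ t, (X t i - sampleMean X i) * (X t j - sampleMean X j)) / n

/-- Block-diagonal part of a matrix with respect to block labels `β`. -/
def blockPart {m k : ℕ} (β : Fin m → Fin k) (M : Matrix (Fin m) (Fin m) ℝ) :
    Matrix (Fin m) (Fin m) ℝ :=
  Matrix.of fun i j => if β i = β j then M i j else 0

/-- Rows of `M` belonging to block `i`, all other rows zeroed out. -/
def restrictRows {m k c : ℕ} (β : Fin m → Fin k) (i : Fin k) (M : Matrix (Fin m) (Fin c) ℝ) :
    Matrix (Fin m) (Fin c) ℝ :=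
  Matrix.of fun a b => if β a = i then M a b else 0

/-- ℓ₂ norm of row `i` of `M`. -/
def rowNorm {m r : ℕ} (M : Matrix (Fin m) (Fin r) ℝ) (i : Fin m) : ℝ :=
  Real.sqrt (∑ j, (M i j) ^ 2)

/-- Set of indices of nonzero rows. -/
def rowSupport {m r : ℕ} (M : Matrix (Fin m) (Fin r) ℝ) : Set (Fin m) := {i | M i ≠ 0}

/-- `W'` is the hard thresholding of `W` keeping the `k` rows of largest ℓ₂ norm
(ties broken toward smaller indices). -/
def IsHT {m r : ℕ} (W : Matrix (Fin m) (Fin r) ℝ) (k : ℕ) (W' : Matrix (Fin m) (Fin r) ℝ) : Prop :=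
  ∃ C : Finset (Fin m), C.card = min k m ∧ (∀ i ∈ C, W' i = W i) ∧ (∀ i ∉ C, W' i = 0) ∧
    ∀ i ∈ C, ∀ j ∉ C, rowNorm W j < rowNorm W i ∨ (rowNorm W j = rowNorm W i ∧ i < j)

/-- Positive semidefinite square root (junk value `0` if not psd). -/
def psqrt {r : ℕ} (M : Matrix (Fin r) (Fin r) ℝ) : Matrix (Fin r) (Fin r) ℝ :=
  if h : M.PosSemidef then (((h.1.eigenvectorUnitary : Matrix (Fin r) (Fin r) ℝ) * diagonal (Real.sqrt ∘ h.1.eigenvalues) *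
      (star h.1.eigenvectorUnitary : Matrix (Fin r) (Fin r) ℝ))) else 0

/-- Inverse square root. -/
def invSqrt {r : ℕ} (M : Matrix (Fin r) (Fin r) ℝ) : Matrix (Fin r) (Fin r) ℝ := (psqrt M)⁻¹

/-- Nuclear norm `Tr √(Mᵀ M)`. -/
def nucNorm {a b : ℕ} (M : Matrix (Fin a) (Fin b) ℝ) : ℝ := (psqrt (Mᵀ * M)).trace

/-- Entrywise ℓ₁ norm. -/
def l1Norm {a b : ℕ} (M : Matrix (Fin a) (Fin b) ℝ) : ℝ := ∑ i, ∑ j, |M i j|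

/-- Entrywise sup norm. -/
def maxAbs {a b : ℕ} (M : Matrix (Fin a) (Fin b) ℝ) : ℝ := sSup {x : ℝ | ∃ i j, x = |M i j|}

/-- Membership in the Fantope `{X : 0 ⪯ X ⪯ I, Tr X = r}`. -/
def InFantope {p : ℕ} (r : ℕ) (X : Matrix (Fin p) (Fin p) ℝ) : Prop :=
  X.PosSemidef ∧ (1 - X).PosSemidef ∧ X.trace = (r : ℝ)

/-- `F` minimizes `-⟨Sh, ·⟩ + ρ ‖·‖_1` over symmetric matrices whose conjugation by
`S0h^{1/2}` lies in the Fantope. -/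
def IsFantopeMin {p : ℕ} (r : ℕ) (Sh S0h : Matrix (Fin p) (Fin p) ℝ) (ρ : ℝ)
    (F : Matrix (Fin p) (Fin p) ℝ) : Prop :=
  F.IsSymm ∧ InFantope r (psqrt S0h * F * psqrt S0h) ∧
    ∀ G : Matrix (Fin p) (Fin p) ℝ, G.IsSymm → InFantope r (psqrt S0h * G * psqrt S0h) →
      -(Shᵀ * F).trace + ρ * l1Norm F ≤ -(Shᵀ * G).trace + ρ * l1Norm G

/-- `L` maximizes `⟨Sh, L Lᵀ⟩` subject to `Lᵀ S0h L = I_r` and row support inside `I`. -/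
def IsRestrictedMax {p r : ℕ} (Sh S0h : Matrix (Fin p) (Fin p) ℝ) (I : Finset (Fin p))
    (L : Matrix (Fin p) (Fin r) ℝ) : Prop :=
  Lᵀ * S0h * L = 1 ∧ (∀ i ∉ I, L i = 0) ∧
    ∀ L' : Matrix (Fin p) (Fin r) ℝ, L'ᵀ * S0h * L' = 1 → (∀ i ∉ I, L' i = 0) →
      (Shᵀ * (L' * L'ᵀ)).trace ≤ (Shᵀ * (L * Lᵀ)).trace

/-- Kullback–Leibler divergence `∫ log (dP/dQ) dP`. -/
def klDivR {α : Type*} [MeasurableSpace α] (P Q : Measure α) : ℝ :=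
  ∫ x, Real.log (P.rnDeriv Q x).toReal ∂P


namespace S10

/-- Squared ℓ2 norm of row `i`. -/
def rn2 {m n : ℕ} (M : Matrix (Fin m) (Fin n) ℝ) (i : Fin m) : ℝ := ∑ j, (M i j) ^ 2

lemma rn2_nonneg {m n : ℕ} (M : Matrix (Fin m) (Fin n) ℝ) (i : Fin m) : 0 ≤ rn2 M i :=
  Finset.sum_nonneg fun _ _ => sq_nonneg _

lemma frob_sq {m n : ℕ} (M : Matrix (Fin m) (Fin n) ℝ) : frob M ^ 2 = ∑ i, rn2 M i :=
  Real.sq_sqrt (Finset.sum_nonneg fun _ _ => rn2_nonneg M _)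

lemma rowNorm_sq {m r : ℕ} (M : Matrix (Fin m) (Fin r) ℝ) (i : Fin m) :
    rowNorm M i ^ 2 = rn2 M i :=
  Real.sq_sqrt (rn2_nonneg M i)

lemma rn2_eq_diag {m n : ℕ} (M : Matrix (Fin m) (Fin n) ℝ) (i : Fin m) :
    rn2 M i = (M * Mᵀ) i i := by
  simp [rn2, Matrix.mul_apply, Matrix.transpose_apply, pow_two]

lemma rn2_mul_orth {p r : ℕ} (W : Matrix (Fin p) (Fin r) ℝ) (P : Matrix (Fin r) (Fin r) ℝ)
    (hPP : P * Pᵀ = 1) (i : Fin p) : rn2 (W * P) i = rn2 W i := by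
  rw [rn2_eq_diag, rn2_eq_diag]
  have h : W * P * (W * P)ᵀ = W * Wᵀ := by
    rw [Matrix.transpose_mul, Matrix.mul_assoc, ← Matrix.mul_assoc P, hPP, Matrix.one_mul]
  rw [h]

lemma sum_sub_sq_le {r : ℕ} (a b : Fin r → ℝ) :
    ∑ j, (a j - b j) ^ 2 ≤
      ∑ j, (a j) ^ 2 + 2 * Real.sqrt (∑ j, (a j) ^ 2) * Real.sqrt (∑ j, (b j) ^ 2)
        + ∑ j, (b j) ^ 2 := by
  have hcs : ∑ j, (-(a j)) * b j ≤
      Real.sqrt (∑ j, (-(a j)) ^ 2) * Real.sqrt (∑ j, (b j) ^ 2) :=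
    Real.sum_mul_le_sqrt_mul_sqrt _ _ _
  simp only [neg_sq, neg_mul, Finset.sum_neg_distrib] at hcs
  have hexp : ∑ j, (a j - b j) ^ 2 =
      ∑ j, (a j) ^ 2 - 2 * ∑ j, a j * b j + ∑ j, (b j) ^ 2 := by
    have e : ∀ j, (a j - b j) ^ 2 = (a j) ^ 2 - 2 * (a j * b j) + (b j) ^ 2 :=
      fun j => by ring
    simp only [e, Finset.sum_add_distrib, Finset.sum_sub_distrib, Finset.mul_sum]
  linarith

set_option maxHeartbeats 1000000 in
/-- Key pointwise bound for a fixed orthogonal `P`. -/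
lemma key {p r s s' : ℕ} (hss' : s ≤ s') (hs'p : s' ≤ p)
    (V W Wb : Matrix (Fin p) (Fin r) ℝ)
    (hVs : (rowSupport V).ncard ≤ s)
    (hWb : IsHT W s' Wb)
    (P : Matrix (Fin r) (Fin r) ℝ) (hP : Pᵀ * P = 1) :
    frob (Wb * P - V) ^ 2 ≤
      (1 + 2 * Real.sqrt ((s : ℝ) / s') * (1 + Real.sqrt ((s : ℝ) / s')))
        * frob (W * P - V) ^ 2 := by
  obtain ⟨C, hCcard, hCeq, hCzero, hCmax⟩ := hWb
  have hPP : P * Pᵀ = 1 := mul_eq_one_comm.mp hP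
  set Δ : Matrix (Fin p) (Fin r) ℝ := W * P - V with hΔ
  set ρ : ℝ := (s : ℝ) / s' with hρ
  have hρ0 : 0 ≤ ρ := by positivity
  set D : ℝ := ∑ i, rn2 Δ i with hD
  have hD0 : 0 ≤ D := Finset.sum_nonneg fun i _ => rn2_nonneg Δ i
  have hfin : (rowSupport V).Finite := Set.toFinite _
  set Sf : Finset (Fin p) := hfin.toFinset with hSfdef
  have hSmem : ∀ i, i ∈ Sf ↔ V i ≠ 0 := fun i => by
    simp [hSfdef, Set.Finite.mem_toFinset, rowSupport]
  have hScard : Sf.card ≤ s := by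
    rw [hSfdef, ← Set.ncard_eq_toFinset_card _ hfin]; exact hVs
  have hcardC : C.card = s' := by rw [hCcard, Nat.min_eq_left hs'p]
  set T : Finset (Fin p) := Sf \ C with hT
  set A : ℝ := ∑ i ∈ T, rn2 W i with hA
  set B : ℝ := ∑ i ∈ T, rn2 Δ i with hB
  have hA0 : 0 ≤ A := Finset.sum_nonneg fun i _ => rn2_nonneg W i
  have hB0 : 0 ≤ B := Finset.sum_nonneg fun i _ => rn2_nonneg Δ i
  -- zero rows of V have rn2 V = 0
  have hVzero : ∀ i, i ∉ Sf → rn2 V i = 0 := by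
    intro i hi
    have hVi : V i = 0 := by
      by_contra h; exact hi ((hSmem i).mpr h)
    simp [rn2, fun j => congrFun hVi j]
  -- rn2 Δ j = rn2 W j for j outside the support of V
  have hΔW : ∀ j, j ∉ Sf → rn2 Δ j = rn2 W j := by
    intro j hj
    have hVj : V j = 0 := by
      by_contra h; exact hj ((hSmem j).mpr h)
    have h1 : rn2 Δ j = rn2 (W * P) j := by
      refine Finset.sum_congr rfl fun k _ => ?_
      have : Δ j k = (W * P) j k - V j k := rfl
      rw [this, congrFun hVj k]
      simp
    rw [h1, rn2_mul_orth W P hPP]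
  -- row norm comparison between T and C
  have hcmp : ∀ i ∈ T, ∀ j ∈ C, rn2 W i ≤ rn2 W j := by
    intro i hi j hj
    have hiC : i ∉ C := (Finset.mem_sdiff.mp hi).2
    have h := hCmax j hj i hiC
    have hle : rowNorm W i ≤ rowNorm W j := by
      rcases h with h | h
      · exact le_of_lt h
      · exact le_of_eq h.1
    have h0 : 0 ≤ rowNorm W i := Real.sqrt_nonneg _
    have h2 := pow_le_pow_left₀ h0 hle 2
    rwa [rowNorm_sq, rowNorm_sq] at h2
  -- the main counting bound : A ≤ ρ * D
  have hAρ : A ≤ ρ * D := by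
    rcases T.eq_empty_or_nonempty with hTe | hTne
    · have : A = 0 := by rw [hA, hTe, Finset.sum_empty]
      rw [this]; exact mul_nonneg hρ0 hD0
    · -- cast cards to ℝ
      have htc1 : (1 : ℝ) ≤ (T.card : ℝ) := by
        exact_mod_cast Nat.one_le_iff_ne_zero.mpr (Finset.card_ne_zero_of_mem hTne.choose_spec)
      have hTt : T.card + (Sf ∩ C).card = Sf.card := by
        rw [hT]; exact Finset.card_sdiff_add_card_inter Sf C
      have hCt : (C \ Sf).card + (Sf ∩ C).card = s' := by
        rw [Finset.inter_comm, ← hcardC]; exact Finset.card_sdiff_add_card_inter C Sf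
      set t : ℝ := ((Sf ∩ C).card : ℝ) with htdef
      have ht0 : 0 ≤ t := Nat.cast_nonneg _
      have hTtR : (T.card : ℝ) + t = (Sf.card : ℝ) := by rw [htdef]; exact_mod_cast hTt
      have hCtR : ((C \ Sf).card : ℝ) + t = (s' : ℝ) := by rw [htdef]; exact_mod_cast hCt
      have hSfR : (Sf.card : ℝ) ≤ (s : ℝ) := by exact_mod_cast hScard
      have hss'R : (s : ℝ) ≤ (s' : ℝ) := by exact_mod_cast hss'
      have hs'pos : (0 : ℝ) < (s' : ℝ) := by linarith
      -- step 1 : pointwise comparison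
      have step1 : ∀ j ∈ C \ Sf, A ≤ (T.card : ℝ) * rn2 Δ j := by
        intro j hj
        have hjC : j ∈ C := (Finset.mem_sdiff.mp hj).1
        have hjS : j ∉ Sf := (Finset.mem_sdiff.mp hj).2
        calc A = ∑ i ∈ T, rn2 W i := rfl
          _ ≤ ∑ _i ∈ T, rn2 W j := Finset.sum_le_sum fun i hi => hcmp i hi j hjC
          _ = (T.card : ℝ) * rn2 W j := by rw [Finset.sum_const, nsmul_eq_mul]
          _ = (T.card : ℝ) * rn2 Δ j := by rw [hΔW j hjS]
      -- step 2 : sum over C \ Sf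
      have hDsub : ∑ j ∈ C \ Sf, rn2 Δ j ≤ D := by
        rw [hD]
        exact Finset.sum_le_sum_of_subset_of_nonneg (Finset.subset_univ _)
          fun i _ _ => rn2_nonneg Δ i
      have step2 : ((C \ Sf).card : ℝ) * A ≤ (T.card : ℝ) * D := by
        have h := Finset.sum_le_sum step1
        have hL : ∑ _j ∈ C \ Sf, A = ((C \ Sf).card : ℝ) * A := by
          rw [Finset.sum_const, nsmul_eq_mul]
        have hR : ∑ j ∈ C \ Sf, (T.card : ℝ) * rn2 Δ j
            = (T.card : ℝ) * ∑ j ∈ C \ Sf, rn2 Δ j := (Finset.mul_sum _ _ _).symm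
        rw [hL, hR] at h
        calc ((C \ Sf).card : ℝ) * A ≤ (T.card : ℝ) * ∑ j ∈ C \ Sf, rn2 Δ j := h
          _ ≤ (T.card : ℝ) * D := by
              apply mul_le_mul_of_nonneg_left hDsub (Nat.cast_nonneg _)
      have hG1 : ((s' : ℝ) - t) * A ≤ ((s : ℝ) - t) * D := by
        have h1 : ((C \ Sf).card : ℝ) = (s' : ℝ) - t := by linarith
        have h2 : (T.card : ℝ) ≤ (s : ℝ) - t := by linarith
        calc ((s' : ℝ) - t) * A = ((C \ Sf).card : ℝ) * A := by rw [h1]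
          _ ≤ (T.card : ℝ) * D := step2
          _ ≤ ((s : ℝ) - t) * D := mul_le_mul_of_nonneg_right h2 hD0
      have hst1 : (1 : ℝ) ≤ (s' : ℝ) - t := by linarith
      rw [hρ, div_mul_eq_mul_div, le_div_iff₀ hs'pos]
      nlinarith [mul_le_mul_of_nonneg_left hG1 (le_of_lt hs'pos),
        mul_nonneg (mul_nonneg ht0 (sub_nonneg.mpr hss'R)) hD0, hA0, hD0]
  -- per row triangle bound
  have hrow : ∀ i, rn2 V i ≤
      rn2 W i + 2 * Real.sqrt (rn2 W i) * Real.sqrt (rn2 Δ i) + rn2 Δ i := by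
    intro i
    have hVi : ∀ j, V i j = (W * P) i j - Δ i j := fun j => by
      simp [hΔ, Matrix.sub_apply]
    have h1 : rn2 V i = ∑ j, ((W * P) i j - Δ i j) ^ 2 :=
      Finset.sum_congr rfl fun j _ => by rw [hVi j]
    have h2 := sum_sub_sq_le (fun j => (W * P) i j) (fun j => Δ i j)
    have h3 : (∑ j, ((W * P) i j) ^ 2) = rn2 W i := rn2_mul_orth W P hPP i
    rw [h1]
    calc ∑ j, ((W * P) i j - Δ i j) ^ 2 ≤ _ := h2
      _ = rn2 W i + 2 * Real.sqrt (rn2 W i) * Real.sqrt (rn2 Δ i) + rn2 Δ i := by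
          rw [h3]; rfl
  -- sum over T with Cauchy–Schwarz
  have hTsum : ∑ i ∈ T, rn2 V i ≤ A + 2 * Real.sqrt A * Real.sqrt B + B := by
    have h1 : ∑ i ∈ T, rn2 V i ≤
        ∑ i ∈ T, (rn2 W i + 2 * Real.sqrt (rn2 W i) * Real.sqrt (rn2 Δ i) + rn2 Δ i) :=
      Finset.sum_le_sum fun i _ => hrow i
    have hcs : ∑ i ∈ T, Real.sqrt (rn2 W i) * Real.sqrt (rn2 Δ i) ≤
        Real.sqrt A * Real.sqrt B := by
      have h := Real.sum_mul_le_sqrt_mul_sqrt T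
        (fun i => Real.sqrt (rn2 W i)) (fun i => Real.sqrt (rn2 Δ i))
      have e1 : ∑ i ∈ T, (Real.sqrt (rn2 W i)) ^ 2 = A :=
        Finset.sum_congr rfl fun i _ => Real.sq_sqrt (rn2_nonneg W i)
      have e2 : ∑ i ∈ T, (Real.sqrt (rn2 Δ i)) ^ 2 = B :=
        Finset.sum_congr rfl fun i _ => Real.sq_sqrt (rn2_nonneg Δ i)
      rwa [e1, e2] at h
    have h2 : ∑ i ∈ T, (rn2 W i + 2 * Real.sqrt (rn2 W i) * Real.sqrt (rn2 Δ i) + rn2 Δ i)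
        = A + 2 * ∑ i ∈ T, Real.sqrt (rn2 W i) * Real.sqrt (rn2 Δ i) + B := by
      rw [Finset.sum_add_distrib, Finset.sum_add_distrib]
      have hm : ∑ i ∈ T, 2 * Real.sqrt (rn2 W i) * Real.sqrt (rn2 Δ i)
          = 2 * ∑ i ∈ T, Real.sqrt (rn2 W i) * Real.sqrt (rn2 Δ i) := by
        rw [Finset.mul_sum]
        exact Finset.sum_congr rfl fun i _ => by ring
      rw [hm, ← hA, ← hB]
    linarith
  -- split the total sum
  have hsplit : frob (Wb * P - V) ^ 2 = ∑ i ∈ C, rn2 Δ i + ∑ i ∈ Cᶜ, rn2 V i := by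
    rw [frob_sq, ← Finset.sum_add_sum_compl C]
    congr 1
    · refine Finset.sum_congr rfl fun i hi => ?_
      refine Finset.sum_congr rfl fun j _ => ?_
      have : (Wb * P - V) i j = Δ i j := by
        simp [Matrix.sub_apply, Matrix.mul_apply, hCeq i hi, hΔ]
      rw [this]
    · refine Finset.sum_congr rfl fun i hi => ?_
      have hiC : i ∉ C := Finset.mem_compl.mp hi
      refine Finset.sum_congr rfl fun j _ => ?_
      have : (Wb * P - V) i j = -V i j := by
        simp [Matrix.sub_apply, Matrix.mul_apply, hCzero i hiC]
      rw [this, neg_sq]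
  have hcompl : ∑ i ∈ Cᶜ, rn2 V i = ∑ i ∈ T, rn2 V i := by
    symm
    apply Finset.sum_subset
    · intro i hi
      exact Finset.mem_compl.mpr (Finset.mem_sdiff.mp hi).2
    · intro i hi hiT
      apply hVzero
      intro hiS
      exact hiT (Finset.mem_sdiff.mpr ⟨hiS, Finset.mem_compl.mp hi⟩)
  -- ∑ over C plus B is at most D
  have hCD : ∑ i ∈ C, rn2 Δ i + B ≤ D := by
    have hdisj : Disjoint C T := by
      rw [hT]
      exact Finset.sdiff_disjoint.symm
    rw [hB, ← Finset.sum_union hdisj]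
    rw [hD]
    exact Finset.sum_le_sum_of_subset_of_nonneg (Finset.subset_univ _)
      fun i _ _ => rn2_nonneg Δ i
  -- put everything together
  have hfrobD : frob (W * P - V) ^ 2 = D := by rw [frob_sq]
  rw [hfrobD, hsplit, hcompl]
  have hsA : Real.sqrt A ≤ Real.sqrt ρ * Real.sqrt D := by
    rw [← Real.sqrt_mul hρ0]
    exact Real.sqrt_le_sqrt hAρ
  have hsB : Real.sqrt B ≤ Real.sqrt D := by
    apply Real.sqrt_le_sqrt
    linarith [Finset.sum_nonneg (fun i (_ : i ∈ C) => rn2_nonneg Δ i)]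
  have hsD : Real.sqrt D * Real.sqrt D = D := Real.mul_self_sqrt hD0
  have hsρ : Real.sqrt ρ * Real.sqrt ρ = ρ := Real.mul_self_sqrt hρ0
  have hprod : Real.sqrt A * Real.sqrt B ≤ Real.sqrt ρ * D := by
    calc Real.sqrt A * Real.sqrt B ≤ (Real.sqrt ρ * Real.sqrt D) * Real.sqrt D :=
          mul_le_mul hsA hsB (Real.sqrt_nonneg B) (by positivity)
      _ = Real.sqrt ρ * D := by rw [mul_assoc, hsD]
  have hρle : ρ * D ≤ Real.sqrt ρ * Real.sqrt ρ * D := by rw [hsρ]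
  nlinarith [hTsum, hCD, hAρ, hprod, Real.sqrt_nonneg ρ, hD0,
    mul_nonneg (Real.sqrt_nonneg ρ) hD0]

/-- Frobenius norm of a negation. -/
lemma frob_neg {m n : ℕ} (M : Matrix (Fin m) (Fin n) ℝ) : frob (-M) = frob M := by
  unfold frob
  congr 1
  exact Finset.sum_congr rfl fun i _ => Finset.sum_congr rfl fun j _ => by
    rw [Matrix.neg_apply, neg_sq]

lemma frob_mul_orth {m n : ℕ} (X : Matrix (Fin m) (Fin n) ℝ) (P : Matrix (Fin n) (Fin n) ℝ)
    (hPP : P * Pᵀ = 1) : frob (X * P) = frob X := by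
  unfold frob
  congr 1
  exact Finset.sum_congr rfl fun i _ => rn2_mul_orth X P hPP i

lemma frob_flip {m n : ℕ} (V M : Matrix (Fin m) (Fin n) ℝ) (P : Matrix (Fin n) (Fin n) ℝ)
    (hP : Pᵀ * P = 1) : frob (V * P - M) = frob (M * Pᵀ - V) := by
  have h1 : V * P - M = -((M * Pᵀ - V) * P) := by
    rw [Matrix.sub_mul, Matrix.mul_assoc, hP, Matrix.mul_one, neg_sub]
  rw [h1, frob_neg, frob_mul_orth _ P (mul_eq_one_comm.mp hP)]

/-- Transfer a pointwise squared bound to the infimum distance. -/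
lemma gdist_sq_le {p r : ℕ} (V W Wb : Matrix (Fin p) (Fin r) ℝ) (K : ℝ) (hK : 1 ≤ K)
    (h : ∀ P : Matrix (Fin r) (Fin r) ℝ, Pᵀ * P = 1 →
      frob (Wb * P - V) ^ 2 ≤ K * frob (W * P - V) ^ 2) :
    gdist V Wb ^ 2 ≤ K * gdist V W ^ 2 := by
  have hK0 : 0 ≤ K := le_trans zero_le_one hK
  have hsK : 0 < Real.sqrt K := Real.sqrt_pos.mpr (lt_of_lt_of_le one_pos hK)
  have hbdd : BddBelow {x : ℝ | ∃ P : Matrix (Fin r) (Fin r) ℝ, Pᵀ * P = 1 ∧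
      x = frob (V * P - Wb)} := by
    refine ⟨0, fun x hx => ?_⟩
    obtain ⟨P, _, rfl⟩ := hx
    exact Real.sqrt_nonneg _
  have hWb0 : 0 ≤ gdist V Wb := by
    apply Real.sInf_nonneg
    rintro x ⟨P, _, rfl⟩
    exact Real.sqrt_nonneg _
  have hgle : ∀ P : Matrix (Fin r) (Fin r) ℝ, Pᵀ * P = 1 →
      gdist V Wb ≤ Real.sqrt K * frob (V * P - W) := by
    intro P hP
    have hQ : (Pᵀ)ᵀ * Pᵀ = 1 := by
      rw [Matrix.transpose_transpose]
      exact mul_eq_one_comm.mp hP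
    have h1 : gdist V Wb ≤ frob (V * P - Wb) := csInf_le hbdd ⟨P, hP, rfl⟩
    have h2 : frob (V * P - Wb) ≤ Real.sqrt K * frob (V * P - W) := by
      rw [frob_flip V Wb P hP, frob_flip V W P hP]
      have hsq : frob (Wb * Pᵀ - V) ^ 2 ≤ (Real.sqrt K * frob (W * Pᵀ - V)) ^ 2 := by
        rw [mul_pow, Real.sq_sqrt hK0]
        exact h Pᵀ hQ
      have h0 : 0 ≤ Real.sqrt K * frob (W * Pᵀ - V) :=
        mul_nonneg (Real.sqrt_nonneg _) (Real.sqrt_nonneg _)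
      exact (pow_le_pow_iff_left₀ (Real.sqrt_nonneg _) h0 two_ne_zero).mp hsq
    exact le_trans h1 h2
  have hmain : gdist V Wb ≤ Real.sqrt K * gdist V W := by
    rw [← div_le_iff₀' hsK]
    apply le_csInf
    · exact ⟨frob (V * 1 - W), 1, by rw [Matrix.transpose_one, Matrix.one_mul], rfl⟩
    · rintro b ⟨P, hP, rfl⟩
      rw [div_le_iff₀' hsK]
      exact hgle P hP
  calc gdist V Wb ^ 2 ≤ (Real.sqrt K * gdist V W) ^ 2 :=
        pow_le_pow_left₀ hWb0 hmain 2
    _ = K * gdist V W ^ 2 := by rw [mul_pow, Real.sq_sqrt hK0]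

end S10

/-- the effect of hard thresholding on the rotation-invariant distance. -/
theorem statement10
    (p r s s' : ℕ) (hss' : s ≤ s') (hs'p : s' ≤ p)
    (V W Wb : Matrix (Fin p) (Fin r) ℝ)
    (hVs : (rowSupport V).ncard ≤ s)
    (hWb : IsHT W s' Wb) :
    gdist V Wb ^ 2 ≤
      (1 + 2 * Real.sqrt ((s : ℝ) / s') * (1 + Real.sqrt ((s : ℝ) / s'))) * gdist V W ^ 2 := by
  apply S10.gdist_sq_le
  · nlinarith [Real.sqrt_nonneg ((s : ℝ) / s')]
  · intro P hP
    exact S10.key hss' hs'p V W Wb hVs hWb P hP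

end
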